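/- For all x ≤ y, α ∈ (0,1), m ≥ 1, n ≥ m with Euclidean division n = mq + r (0 ≤ r < m), one has ℙ(X̄ₙ ≥ αx + (1-α)y) ≥ ℙ(X̄ₘ ≥ x)^{⌊αq⌋} · ℙ(X̄ₘ ≥ y)^{q - ⌊αq⌋} · ℙ(X₁ ≥ y)^r. -/

import Mathlib

open MeasureTheory ProbabilityTheory Filter Topology

/-- Empirical mean of the first `n` variables. -/
noncomputable def empMean {Ω : Type*} (X : ℕ → Ω → ℝ) (n : ℕ) (ω : Ω) : ℝ :=
  (∑ i ∈ Finset.range n, X i ω) / n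

/-- The entropy `s(x) = sup_{n ≥ 1} (1/n) log ℙ(X̄ₙ ≥ x)`, with values in `[-∞, 0]`. -/
noncomputable def entropy {Ω : Type*} [MeasurableSpace Ω] (μ : Measure Ω)
    (X : ℕ → Ω → ℝ) (x : ℝ) : EReal :=
  ⨆ n : ℕ, ⨆ _ : 1 ≤ n, (((n : ℝ)⁻¹ : ℝ) : EReal) *
    ENNReal.log (μ {ω | x ≤ empMean X n ω})

/-- The pressure `p(λ) = log 𝔼(e^{λ X₁})`, with values in `(-∞, ∞]`. -/
noncomputable def pressure {Ω : Type*} [MeasurableSpace Ω] (μ : Measure Ω)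
    (X : ℕ → Ω → ℝ) (l : ℝ) : EReal :=
  ENNReal.log (∫⁻ ω, ENNReal.ofReal (Real.exp (l * X 0 ω)) ∂μ)


section Helpers
open MeasureTheory ProbabilityTheory Finset

variable {Ω : Type*} [MeasurableSpace Ω] (μ : Measure Ω) [IsProbabilityMeasure μ]
  (X : ℕ → Ω → ℝ)

-- aux: independence of disjoint finset sums
lemma indep_sums (hmeas : ∀ i, Measurable (X i))
    (hindep : iIndepFun X μ)
    (S T : Finset ℕ) (hST : Disjoint S T) :
    IndepFun (fun ω => ∑ i ∈ S, X i ω) (fun ω => ∑ i ∈ T, X i ω) μ := by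
  have h := hindep.indepFun_finset S T hST hmeas
  have hφ : ∀ (U : Finset ℕ), Measurable (fun v : {x // x ∈ U} → ℝ => ∑ i, v i) := by
    intro U
    exact Finset.measurable_sum _ (fun i _ => measurable_pi_apply i)
  have h2 := h.comp (hφ S) (hφ T)
  have e : ∀ (U : Finset ℕ),
      ((fun v : {x // x ∈ U} → ℝ => ∑ i, v i) ∘ fun ω (i : U) => X i ω)
        = fun ω => ∑ i ∈ U, X i ω := by
    intro U; ext ω; exact Finset.sum_attach U (fun i => X i ω)
  rw [e S, e T] at h2
  exact h2

lemma map_add_of_indep {f g : Ω → ℝ} (hf : Measurable f) (hg : Measurable g)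
    (h : IndepFun f g μ) :
    μ.map (fun ω => f ω + g ω)
      = ((μ.map f).prod (μ.map g)).map (fun p : ℝ × ℝ => p.1 + p.2) := by
  rw [← (indepFun_iff_map_prod_eq_prod_map_map hf.aemeasurable hg.aemeasurable).mp h,
    Measure.map_map measurable_add (hf.prodMk hg)]
  rfl

lemma map_Ico_sum (hmeas : ∀ i, Measurable (X i))
    (hindep : iIndepFun X μ)
    (hident : ∀ i, IdentDistrib (X i) (X 0) μ μ) (b : ℕ) : ∀ a : ℕ,
    μ.map (fun ω => ∑ i ∈ Finset.Ico a (a + b), X i ω)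
      = μ.map (fun ω => ∑ i ∈ Finset.range b, X i ω) := by
  induction b with
  | zero => intro a; simp
  | succ b ih =>
    intro a
    have hsum : ∀ c : ℕ, Measurable (fun ω => ∑ i ∈ Finset.Ico c (c + b), X i ω) :=
      fun c => Finset.measurable_sum _ (fun i _ => hmeas i)
    have e1 : (fun ω => ∑ i ∈ Finset.Ico a (a + (b + 1)), X i ω)
        = fun ω => (fun ω => ∑ i ∈ Finset.Ico a (a + b), X i ω) ω + X (a + b) ω := by
      ext ω
      rw [show a + (b + 1) = (a + b) + 1 by ring,
        Finset.sum_Ico_succ_top (Nat.le_add_right a b)]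
    have e2 : (fun ω => ∑ i ∈ Finset.range (b + 1), X i ω)
        = fun ω => (fun ω => ∑ i ∈ Finset.Ico 0 (0 + b), X i ω) ω + X b ω := by
      ext ω
      rw [Finset.sum_range_succ, Finset.range_eq_Ico, Nat.zero_add]
    have hi1 : IndepFun (fun ω => ∑ i ∈ Finset.Ico a (a + b), X i ω) (X (a + b)) μ := by
      have := indep_sums μ X hmeas hindep (Finset.Ico a (a + b)) {a + b}
        (by simp [Finset.disjoint_singleton_right])
      simp only [Finset.sum_singleton] at this; exact this
    have hi2 : IndepFun (fun ω => ∑ i ∈ Finset.Ico 0 (0 + b), X i ω) (X b) μ := by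
      have := indep_sums μ X hmeas hindep (Finset.Ico 0 (0 + b)) {b}
        (by simp [Finset.disjoint_singleton_right])
      simp only [Finset.sum_singleton] at this; exact this
    rw [e1, e2, map_add_of_indep μ (hsum a) (hmeas _) hi1,
      map_add_of_indep μ (hsum 0) (hmeas _) hi2, ih a, ih 0,
      (hident (a + b)).map_eq, (hident b).map_eq]

lemma block_measure_eq (hmeas : ∀ i, Measurable (X i))
    (hindep : iIndepFun X μ)
    (hident : ∀ i, IdentDistrib (X i) (X 0) μ μ) (a b : ℕ) (d : ℝ) :
    μ {ω | d ≤ ∑ i ∈ Finset.Ico a (a + b), X i ω}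
      = μ {ω | d ≤ ∑ i ∈ Finset.range b, X i ω} := by
  have h1 : Measurable (fun ω => ∑ i ∈ Finset.Ico a (a + b), X i ω) :=
    Finset.measurable_sum _ (fun i _ => hmeas i)
  have h2 : Measurable (fun ω => ∑ i ∈ Finset.range b, X i ω) :=
    Finset.measurable_sum _ (fun i _ => hmeas i)
  have e1 : {ω | d ≤ ∑ i ∈ Finset.Ico a (a + b), X i ω}
      = (fun ω => ∑ i ∈ Finset.Ico a (a + b), X i ω) ⁻¹' Set.Ici d := rfl
  have e2 : {ω | d ≤ ∑ i ∈ Finset.range b, X i ω}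
      = (fun ω => ∑ i ∈ Finset.range b, X i ω) ⁻¹' Set.Ici d := rfl
  rw [e1, e2, ← Measure.map_apply h1 measurableSet_Ici,
    ← Measure.map_apply h2 measurableSet_Ici,
    map_Ico_sum μ X hmeas hindep hident b a]

lemma concat_ineq (hmeas : ∀ i, Measurable (X i))
    (hindep : iIndepFun X μ)
    (a b : ℕ) (c d : ℝ) :
    μ {ω | c ≤ ∑ i ∈ Finset.range a, X i ω} * μ {ω | d ≤ ∑ i ∈ Finset.Ico a (a + b), X i ω}
      ≤ μ {ω | c + d ≤ ∑ i ∈ Finset.range (a + b), X i ω} := by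
  have hdisj : Disjoint (Finset.range a) (Finset.Ico a (a + b)) := by
    rw [Finset.range_eq_Ico]
    exact Finset.Ico_disjoint_Ico_consecutive 0 a (a + b)
  have hind := indep_sums μ X hmeas hindep (Finset.range a) (Finset.Ico a (a + b)) hdisj
  have key := hind.measure_inter_preimage_eq_mul (Set.Ici c) (Set.Ici d)
    measurableSet_Ici measurableSet_Ici
  have e1 : {ω | c ≤ ∑ i ∈ Finset.range a, X i ω}
      = (fun ω => ∑ i ∈ Finset.range a, X i ω) ⁻¹' Set.Ici c := rfl
  have e2 : {ω | d ≤ ∑ i ∈ Finset.Ico a (a + b), X i ω}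
      = (fun ω => ∑ i ∈ Finset.Ico a (a + b), X i ω) ⁻¹' Set.Ici d := rfl
  rw [e1, e2, ← key]
  apply measure_mono
  rintro ω ⟨h1, h2⟩
  have hsum : (∑ i ∈ Finset.range a, X i ω) + (∑ i ∈ Finset.Ico a (a + b), X i ω)
      = ∑ i ∈ Finset.range (a + b), X i ω := by
    rw [Finset.range_eq_Ico, Finset.range_eq_Ico]
    exact Finset.sum_Ico_consecutive _ (Nat.zero_le a) (Nat.le_add_right a b)
  simp only [Set.mem_setOf_eq, ← hsum]
  exact add_le_add h1 h2
end Helpers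

theorem subadditivity_inequality {Ω : Type*} [MeasurableSpace Ω] (μ : Measure Ω) [IsProbabilityMeasure μ]
    (X : ℕ → Ω → ℝ) (hmeas : ∀ i, Measurable (X i))
    (hindep : iIndepFun X μ)
    (hident : ∀ i, IdentDistrib (X i) (X 0) μ μ)
    (x y α : ℝ) (hxy : x ≤ y) (hα : α ∈ Set.Ioo (0 : ℝ) 1)
    (m n q r : ℕ) (hm : 1 ≤ m) (hmn : m ≤ n) (hdiv : n = m * q + r) (hr : r < m) :
    μ {ω | empMean X m ω ≥ x} ^ (Nat.floor (α * q)) *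
      μ {ω | empMean X m ω ≥ y} ^ (q - Nat.floor (α * q)) *
        μ {ω | X 0 ω ≥ y} ^ r ≤
      μ {ω | empMean X n ω ≥ α * x + (1 - α) * y} := by
  set k := Nat.floor (α * q) with hk
  have hmpos : (0 : ℝ) < m := by exact_mod_cast hm
  have hnpos : (0 : ℝ) < n := by
    have : 1 ≤ n := le_trans hm hmn
    exact_mod_cast this
  have hα0 := hα.1
  have hα1 := hα.2
  have hk_le : (k : ℝ) ≤ α * q := Nat.floor_le (by positivity)
  have hkq : k ≤ q := by
    have h1 : α * q ≤ (q : ℝ) := by nlinarith [Nat.cast_nonneg (α := ℝ) q]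
    calc k ≤ Nat.floor ((q : ℝ) : ℝ) := Nat.floor_mono h1
    _ = q := Nat.floor_natCast q
  -- rewrite empMean events as events about sums
  have hset : ∀ t : ℝ, {ω | empMean X m ω ≥ t} = {ω | t * m ≤ ∑ i ∈ Finset.range m, X i ω} := by
    intro t
    ext ω
    simp only [Set.mem_setOf_eq, empMean, ge_iff_le, le_div_iff₀ hmpos]
  rw [hset x, hset y]
  -- the threshold function
  set T : ℕ → ℝ := fun s => (((min s k : ℕ) : ℝ) * x + ((s - min s k : ℕ) : ℝ) * y) * m with hT
  have claim1 : ∀ s : ℕ,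
      μ {ω | x * m ≤ ∑ i ∈ Finset.range m, X i ω} ^ (min s k) *
        μ {ω | y * m ≤ ∑ i ∈ Finset.range m, X i ω} ^ (s - min s k)
      ≤ μ {ω | T s ≤ ∑ i ∈ Finset.range (m * s), X i ω} := by
    intro s
    induction s with
    | zero =>
      have hset0 : {ω : Ω | T 0 ≤ ∑ i ∈ Finset.range (m * 0), X i ω} = Set.univ := by
        ext ω
        simp [hT]
      rw [hset0, measure_univ]
      simp [Nat.zero_min]
    | succ s ih =>
      by_cases hs : s < k
      · have hmin1 : min s k = s := min_eq_left (le_of_lt hs)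
        have hmin2 : min (s + 1) k = s + 1 := min_eq_left (Nat.succ_le_of_lt hs)
        have hTstep : T (s + 1) = T s + x * m := by
          simp only [hT, hmin1, hmin2, Nat.sub_self]
          push_cast
          ring
        have hblock := block_measure_eq μ X hmeas hindep hident (m * s) m (x * m)
        have hcon := concat_ineq μ X hmeas hindep (m * s) m (T s) (x * m)
        rw [hblock] at hcon
        calc μ {ω | x * m ≤ ∑ i ∈ Finset.range m, X i ω} ^ (min (s + 1) k) *
              μ {ω | y * m ≤ ∑ i ∈ Finset.range m, X i ω} ^ ((s + 1) - min (s + 1) k)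
            = (μ {ω | x * m ≤ ∑ i ∈ Finset.range m, X i ω} ^ (min s k) *
              μ {ω | y * m ≤ ∑ i ∈ Finset.range m, X i ω} ^ (s - min s k)) *
              μ {ω | x * m ≤ ∑ i ∈ Finset.range m, X i ω} := by
              rw [hmin1, hmin2, Nat.sub_self, Nat.sub_self]
              ring
          _ ≤ μ {ω | T s ≤ ∑ i ∈ Finset.range (m * s), X i ω} *
              μ {ω | x * m ≤ ∑ i ∈ Finset.range m, X i ω} := mul_le_mul_left ih _
          _ ≤ μ {ω | T s + x * m ≤ ∑ i ∈ Finset.range (m * s + m), X i ω} := hcon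
          _ = μ {ω | T (s + 1) ≤ ∑ i ∈ Finset.range (m * (s + 1)), X i ω} := by
              rw [hTstep, Nat.mul_succ]
      · have hks : k ≤ s := Nat.le_of_not_lt hs
        have hmin1 : min s k = k := min_eq_right hks
        have hmin2 : min (s + 1) k = k := min_eq_right (le_trans hks (Nat.le_succ s))
        have hsub : (s + 1) - k = (s - k) + 1 := Nat.succ_sub hks
        have hTstep : T (s + 1) = T s + y * m := by
          simp only [hT, hmin1, hmin2, hsub]
          push_cast [Nat.cast_sub hks]
          ring
        have hblock := block_measure_eq μ X hmeas hindep hident (m * s) m (y * m)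
        have hcon := concat_ineq μ X hmeas hindep (m * s) m (T s) (y * m)
        rw [hblock] at hcon
        calc μ {ω | x * m ≤ ∑ i ∈ Finset.range m, X i ω} ^ (min (s + 1) k) *
              μ {ω | y * m ≤ ∑ i ∈ Finset.range m, X i ω} ^ ((s + 1) - min (s + 1) k)
            = (μ {ω | x * m ≤ ∑ i ∈ Finset.range m, X i ω} ^ (min s k) *
              μ {ω | y * m ≤ ∑ i ∈ Finset.range m, X i ω} ^ (s - min s k)) *
              μ {ω | y * m ≤ ∑ i ∈ Finset.range m, X i ω} := by
              rw [hmin1, hmin2, hsub]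
              ring
          _ ≤ μ {ω | T s ≤ ∑ i ∈ Finset.range (m * s), X i ω} *
              μ {ω | y * m ≤ ∑ i ∈ Finset.range m, X i ω} := mul_le_mul_left ih _
          _ ≤ μ {ω | T s + y * m ≤ ∑ i ∈ Finset.range (m * s + m), X i ω} := hcon
          _ = μ {ω | T (s + 1) ≤ ∑ i ∈ Finset.range (m * (s + 1)), X i ω} := by
              rw [hTstep, Nat.mul_succ]
  -- single-variable event measure
  have hz : ∀ a : ℕ, μ {ω | y ≤ X a ω} = μ {ω | X 0 ω ≥ y} := by
    intro a
    have e1 : {ω | y ≤ X a ω} = X a ⁻¹' Set.Ici y := rfl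
    have e2 : {ω | X 0 ω ≥ y} = X 0 ⁻¹' Set.Ici y := rfl
    rw [e1, e2, ← Measure.map_apply (hmeas a) measurableSet_Ici,
      ← Measure.map_apply (hmeas 0) measurableSet_Ici, (hident a).map_eq]
  have claim2 : ∀ j : ℕ,
      μ {ω | x * m ≤ ∑ i ∈ Finset.range m, X i ω} ^ k *
        μ {ω | y * m ≤ ∑ i ∈ Finset.range m, X i ω} ^ (q - k) *
          μ {ω | X 0 ω ≥ y} ^ j
      ≤ μ {ω | T q + j * y ≤ ∑ i ∈ Finset.range (m * q + j), X i ω} := by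
    intro j
    induction j with
    | zero =>
      have := claim1 q
      rw [min_eq_right hkq] at this
      simpa using this
    | succ j ih =>
      have hsing : {ω : Ω | y ≤ ∑ i ∈ Finset.Ico (m * q + j) (m * q + j + 1), X i ω}
          = {ω | y ≤ X (m * q + j) ω} := by
        ext ω
        rw [Set.mem_setOf_eq, Finset.sum_Ico_succ_top (le_refl _), Finset.Ico_self,
          Finset.sum_empty, zero_add]
        rfl
      have hcon := concat_ineq μ X hmeas hindep (m * q + j) 1 (T q + j * y) y
      rw [hsing, hz (m * q + j)] at hcon
      calc μ {ω | x * m ≤ ∑ i ∈ Finset.range m, X i ω} ^ k *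
            μ {ω | y * m ≤ ∑ i ∈ Finset.range m, X i ω} ^ (q - k) *
              μ {ω | X 0 ω ≥ y} ^ (j + 1)
          = (μ {ω | x * m ≤ ∑ i ∈ Finset.range m, X i ω} ^ k *
            μ {ω | y * m ≤ ∑ i ∈ Finset.range m, X i ω} ^ (q - k) *
              μ {ω | X 0 ω ≥ y} ^ j) * μ {ω | X 0 ω ≥ y} := by
            ring
        _ ≤ μ {ω | T q + j * y ≤ ∑ i ∈ Finset.range (m * q + j), X i ω} *
              μ {ω | X 0 ω ≥ y} := mul_le_mul_left ih _
        _ ≤ μ {ω | (T q + j * y) + y ≤ ∑ i ∈ Finset.range (m * q + j + 1), X i ω} := hcon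
        _ = μ {ω | T q + ((j + 1 : ℕ) : ℝ) * y ≤ ∑ i ∈ Finset.range (m * q + (j + 1)), X i ω} := by
            congr 1
            ext ω
            simp only [Set.mem_setOf_eq]
            have e2 : m * q + (j + 1) = m * q + j + 1 := rfl
            rw [e2]
            push_cast
            constructor <;> intro h <;> linarith
  have final := claim2 r
  refine le_trans final (measure_mono ?_)
  intro ω hω
  simp only [Set.mem_setOf_eq] at hω
  simp only [Set.mem_setOf_eq, ge_iff_le, empMean, le_div_iff₀ hnpos]
  have hsum_eq : ∑ i ∈ Finset.range (m * q + r), X i ω = ∑ i ∈ Finset.range n, X i ω := by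
    rw [hdiv]
  rw [← hsum_eq]
  refine le_trans ?_ hω
  -- arithmetic: (α x + (1-α) y) * n ≤ T q + r * y
  have hTq : T q = ((k : ℝ) * x + ((q : ℝ) - k) * y) * m := by
    simp only [hT, min_eq_right hkq, Nat.cast_sub hkq]
  rw [hTq]
  have hncast : (n : ℝ) = m * q + r := by exact_mod_cast hdiv
  rw [hncast]
  have hr0 : (0 : ℝ) ≤ r := Nat.cast_nonneg r
  nlinarith [mul_nonneg (mul_nonneg (sub_nonneg.mpr hxy) (sub_nonneg.mpr hk_le)) (le_of_lt hmpos),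
    mul_nonneg (mul_nonneg (sub_nonneg.mpr hxy) (le_of_lt hα0)) hr0]
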